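/- If F ⊆ ℕ is a C-set and n ∈ ℕ, then both nF = {n·k : k ∈ F} and n⁻¹F = {k ∈ ℕ : n·k ∈ F} are C-sets. -/

import Mathlib

open Finset

/-- `F ⊆ ℕ₊` is a J-set: for every `m ∈ ℕ` and every sequence `s : ℕ₊ → ℤ^m`
there exist `r ∈ ℕ₊` and a nonempty finite `α ⊆ ℕ₊` such that
`r + s_α i ∈ F` for every `i ∈ {1,…,m}`, where `s_α = ∑_{n∈α} s n`. -/
def IsJSet (F : Set ℕ+) : Prop :=
  ∀ (m : ℕ) (s : ℕ+ → Fin m → ℤ),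
    ∃ (r : ℕ+) (α : Finset ℕ+), α.Nonempty ∧
      ∀ i : Fin m, ∃ k ∈ F, ((k : ℕ) : ℤ) = ((r : ℕ) : ℤ) + ∑ n ∈ α, s n i

/-- An ultrafilter `p` on `ℕ₊` is idempotent: `p + p = p`, where
`A ∈ p + q ↔ {n | {m | n + m ∈ A} ∈ q} ∈ p`. -/
def IsIdempotentUF (p : Ultrafilter ℕ+) : Prop :=
  ∀ A : Set ℕ+, ({n : ℕ+ | {m : ℕ+ | n + m ∈ A} ∈ p} ∈ p ↔ A ∈ p)

lemma mul_inj (n : ℕ+) : Function.Injective (fun k : ℕ+ => n * k) := by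
  intro a b h
  exact PNat.eq (Nat.eq_of_mul_eq_mul_left n.pos (by exact_mod_cast congrArg PNat.val h))

lemma range_mul_mem (n : ℕ+) (p : Ultrafilter ℕ+) (hp : IsIdempotentUF p) :
    Set.range (fun k : ℕ+ => n * k) ∈ p := by
  haveI : NeZero (n : ℕ) := ⟨n.pos.ne'⟩
  set g : ℕ+ → ZMod (n : ℕ) := fun k => ((k : ℕ) : ZMod (n : ℕ)) with hg
  obtain ⟨a, ha⟩ := Ultrafilter.eq_pure_of_finite (p.map g)
  have hA : g ⁻¹' {a} ∈ p := by
    have h1 : {a} ∈ p.map g := by rw [ha]; exact rfl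
    exact Ultrafilter.mem_map.mp h1
  have h2 := (hp (g ⁻¹' {a})).mpr hA
  obtain ⟨k, hk⟩ := Ultrafilter.nonempty_of_mem (Filter.inter_mem h2 hA)
  obtain ⟨j, hj⟩ := Ultrafilter.nonempty_of_mem (Filter.inter_mem hk.1 hA)
  have e1 : g k = a := hk.2
  have e2 : g j = a := hj.2
  have e3 : g (k + j) = a := hj.1
  have e4 : g (k + j) = g k + g j := by simp [hg]
  have ha0 : a = 0 := by
    have h5 : a + a = a := by
      calc a + a = g k + g j := by rw [e1, e2]
        _ = g (k + j) := e4.symm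
        _ = a := e3
    exact add_eq_left.mp h5
  rw [ha0] at hA
  refine Filter.mem_of_superset hA ?_
  intro k hk0
  have hdvd : (n : ℕ) ∣ (k : ℕ) :=
    (ZMod.natCast_eq_zero_iff _ _).mp hk0
  have hpos : 0 < (k : ℕ) / (n : ℕ) :=
    Nat.div_pos (Nat.le_of_dvd k.pos hdvd) n.pos
  refine ⟨⟨(k : ℕ) / (n : ℕ), hpos⟩, ?_⟩
  apply PNat.eq
  exact Nat.mul_div_cancel' hdvd

lemma isJSet_of_preimage (n : ℕ+) (A : Set ℕ+)
    (hB : IsJSet ((fun k : ℕ+ => n * k) ⁻¹' A)) : IsJSet A := by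
  intro m s
  haveI : NeZero (n : ℕ) := ⟨n.pos.ne'⟩
  set P : ℕ → Fin m → ℤ := fun N i => ∑ j ∈ Finset.range N, s j.succPNat i with hP
  set g : ℕ → (Fin m → ZMod (n : ℕ)) := fun N i => ((P N i : ℤ) : ZMod (n : ℕ)) with hg
  obtain ⟨v, hv⟩ := Finite.exists_infinite_fiber g
  have hS : {N | g N = v}.Infinite := by
    rw [← Set.infinite_coe_iff]
    exact hv
  set N' : ℕ → ℕ := Nat.nth (fun N => g N = v) with hN'
  have hmem : ∀ k, g (N' k) = v := fun k => Nat.nth_mem_of_infinite hS k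
  have hmono : StrictMono N' := Nat.nth_strictMono hS
  have hdvd : ∀ (a b : ℕ) (i : Fin m),
      ((n : ℕ) : ℤ) ∣ (P (N' b) i - P (N' a) i) := by
    intro a b i
    rw [← ZMod.intCast_zmod_eq_zero_iff_dvd]
    push_cast
    have e1 : ((P (N' b) i : ℤ) : ZMod (n : ℕ)) = v i := congrFun (hmem b) i
    have e2 : ((P (N' a) i : ℤ) : ZMod (n : ℕ)) = v i := congrFun (hmem a) i
    rw [e1, e2, sub_self]
  set t : ℕ+ → Fin m → ℤ :=
    fun k i => (P (N' (k : ℕ)) i - P (N' ((k : ℕ) - 1)) i) / ((n : ℕ) : ℤ) with ht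
  have hnt : ∀ (k : ℕ+) (i : Fin m),
      ((n : ℕ) : ℤ) * t k i = P (N' (k : ℕ)) i - P (N' ((k : ℕ) - 1)) i :=
    fun k i => Int.mul_ediv_cancel' (hdvd _ _ i)
  set β : ℕ+ → Finset ℕ := fun k => Finset.Ico (N' ((k : ℕ) - 1)) (N' (k : ℕ)) with hβ
  have hβsum : ∀ (k : ℕ+) (i : Fin m),
      ∑ j ∈ β k, s j.succPNat i = P (N' (k : ℕ)) i - P (N' ((k : ℕ) - 1)) i := by
    intro k i
    exact Finset.sum_Ico_eq_sub _ (hmono.monotone (Nat.sub_le _ 1))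
  have hβne : ∀ k : ℕ+, (β k).Nonempty := by
    intro k
    exact Finset.nonempty_Ico.mpr (hmono (Nat.sub_lt k.pos one_pos))
  have hβdisj : ∀ k k' : ℕ+, k ≠ k' → Disjoint (β k) (β k') := by
    have key : ∀ k k' : ℕ+, k < k' → Disjoint (β k) (β k') := by
      intro k k' hlt
      rw [Finset.disjoint_left]
      intro x hx hx'
      have h1 : x < N' (k : ℕ) := (Finset.mem_Ico.mp hx).2
      have h2 : N' ((k' : ℕ) - 1) ≤ x := (Finset.mem_Ico.mp hx').1
      have h3 : (k : ℕ) ≤ (k' : ℕ) - 1 := Nat.le_sub_one_of_lt hlt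
      exact absurd (hmono.monotone h3) (by omega)
    intro k k' hne
    rcases lt_or_gt_of_ne hne with h | h
    · exact key _ _ h
    · exact (key _ _ h).symm
  obtain ⟨r₀, α, hαne, hα⟩ := hB m t
  refine ⟨n * r₀, (α.biUnion β).map ⟨Nat.succPNat, Nat.succPNat_injective⟩, ?_, ?_⟩
  · obtain ⟨k, hk⟩ := hαne
    obtain ⟨j, hj⟩ := hβne k
    exact ⟨j.succPNat, Finset.mem_map_of_mem _ (Finset.mem_biUnion.mpr ⟨k, hk, hj⟩)⟩
  · intro i
    obtain ⟨k₀, hk₀A, hk₀⟩ := hα i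
    refine ⟨n * k₀, hk₀A, ?_⟩
    have hsum : ∑ x ∈ (α.biUnion β).map ⟨Nat.succPNat, Nat.succPNat_injective⟩, s x i
        = ((n : ℕ) : ℤ) * ∑ k ∈ α, t k i := by
      rw [Finset.sum_map]
      rw [Finset.sum_biUnion (fun k hk k' hk' hne => hβdisj k k' hne)]
      rw [Finset.mul_sum]
      refine Finset.sum_congr rfl (fun k _ => ?_)
      simp [hβsum k i, (hnt k i).symm]
    rw [hsum]
    push_cast
    linear_combination ((n : ℕ) : ℤ) * hk₀

lemma isJSet_of_image (n : ℕ+) (A : Set ℕ+)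
    (hB : IsJSet ((fun k : ℕ+ => n * k) '' A)) : IsJSet A := by
  intro m s
  rcases Nat.eq_zero_or_pos m with rfl | hm
  · exact ⟨1, {1}, ⟨1, by simp⟩, fun i => i.elim0⟩
  obtain ⟨r, α, hαne, hα⟩ := hB m (fun k i => ((n : ℕ) : ℤ) * s k i)
  obtain ⟨k₀, ⟨j₀, hj₀A, hj₀e⟩, hk₀⟩ := hα ⟨0, hm⟩
  have hk₀' : ((k₀ : ℕ) : ℤ) = ((n : ℕ) : ℤ) * ((j₀ : ℕ) : ℤ) := by
    rw [← hj₀e]; push_cast; ring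
  have hdvd : ((n : ℕ) : ℤ) ∣ ((r : ℕ) : ℤ) := by
    refine ⟨((j₀ : ℕ) : ℤ) - ∑ x ∈ α, s x ⟨0, hm⟩, ?_⟩
    rw [← Finset.mul_sum] at hk₀
    linear_combination hk₀' - hk₀
  obtain ⟨c, hc⟩ := Int.natCast_dvd_natCast.mp hdvd
  have hcpos : 0 < c := by
    rcases Nat.eq_zero_or_pos c with rfl | h
    · exact absurd hc (by simpa using r.pos.ne')
    · exact h
  refine ⟨⟨c, hcpos⟩, α, hαne, fun i => ?_⟩
  obtain ⟨k, ⟨j, hjA, hje⟩, hk⟩ := hα i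
  refine ⟨j, hjA, ?_⟩
  have hk' : ((k : ℕ) : ℤ) = ((n : ℕ) : ℤ) * ((j : ℕ) : ℤ) := by
    rw [← hje]; push_cast; ring
  have hrc : ((r : ℕ) : ℤ) = ((n : ℕ) : ℤ) * (c : ℤ) := by exact_mod_cast hc
  have hne : ((n : ℕ) : ℤ) ≠ 0 := by positivity
  show ((j : ℕ) : ℤ) = ((c : ℕ) : ℤ) + ∑ x ∈ α, s x i
  apply mul_left_cancel₀ hne
  rw [← Finset.mul_sum] at hk
  linear_combination hk - hk' + hrc

lemma idem_map (n : ℕ+) (p : Ultrafilter ℕ+) (hp : IsIdempotentUF p) :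
    IsIdempotentUF (p.map (fun k : ℕ+ => n * k)) := by
  intro A
  rw [Ultrafilter.mem_map, Ultrafilter.mem_map]
  have key : (fun k : ℕ+ => n * k) ⁻¹' {a | {b | a + b ∈ A} ∈ p.map (fun k : ℕ+ => n * k)}
      = {a | {b | a + b ∈ ((fun k : ℕ+ => n * k) ⁻¹' A)} ∈ p} := by
    ext k
    simp only [Set.mem_preimage, Set.mem_setOf_eq, Ultrafilter.mem_map]
    have hset : (fun k : ℕ+ => n * k) ⁻¹' {b | n * k + b ∈ A}
        = {b : ℕ+ | k + b ∈ ((fun k : ℕ+ => n * k) ⁻¹' A)} := by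
      ext j
      simp [mul_add]
    rw [hset]
    exact Iff.rfl
  rw [key]
  exact hp _

lemma idem_comap (n : ℕ+) (p : Ultrafilter ℕ+) (hp : IsIdempotentUF p) :
    IsIdempotentUF (p.comap (mul_inj n) (range_mul_mem n p hp)) := by
  set f : ℕ+ → ℕ+ := fun k => n * k with hf
  set q := p.comap (mul_inj n) (range_mul_mem n p hp) with hq
  have hmemq : ∀ s : Set ℕ+, s ∈ q ↔ f '' s ∈ p := fun s =>
    Ultrafilter.mem_comap _ _ _
  intro A
  rw [hmemq, hmemq]
  set E := {x : ℕ+ | {y : ℕ+ | x + y ∈ f '' A} ∈ p} with hE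
  have hrange : Set.range f ∈ p := range_mul_mem n p hp
  have hinner : ∀ a : ℕ+,
      {y : ℕ+ | f a + y ∈ f '' A} ∩ Set.range f = f '' {b | a + b ∈ A} := by
    intro a
    ext y
    constructor
    · rintro ⟨hy, b, rfl⟩
      refine ⟨b, ?_, rfl⟩
      obtain ⟨c, hcA, hce⟩ := hy
      have hfe : f (a + b) = f c := by
        rw [hce]; simp only [hf, mul_add]
      have hac : a + b = c := mul_inj n (by simpa [hf] using hfe)
      show a + b ∈ A
      exact hac.symm ▸ hcA
    · rintro ⟨b, hb, rfl⟩
      refine ⟨⟨a + b, hb, ?_⟩, ⟨b, rfl⟩⟩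
      simp only [hf, mul_add]
  have hDE : ∀ a : ℕ+, (f a ∈ E ↔ {b | a + b ∈ A} ∈ q) := by
    intro a
    rw [hmemq, ← hinner a]
    exact ⟨fun h => Filter.inter_mem h hrange,
      fun h => Filter.mem_of_superset h Set.inter_subset_left⟩
  have himg : f '' {a | {b | a + b ∈ A} ∈ q} = E ∩ Set.range f := by
    ext x
    constructor
    · rintro ⟨a, ha, rfl⟩
      exact ⟨(hDE a).mpr ha, a, rfl⟩
    · rintro ⟨hxE, a, rfl⟩
      exact ⟨a, (hDE a).mp hxE, rfl⟩
  rw [himg]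
  have h1 : E ∩ Set.range f ∈ p ↔ E ∈ p :=
    ⟨fun h => Filter.mem_of_superset h Set.inter_subset_left,
     fun h => Filter.inter_mem h hrange⟩
  rw [h1]
  exact hp (f '' A)

/-- `F ⊆ ℕ₊` is a C-set: there is an idempotent ultrafilter `p` on `ℕ₊` such that
`F ∈ p` and every member of `p` is a J-set. -/
def IsCSet (F : Set ℕ+) : Prop :=
  ∃ p : Ultrafilter ℕ+, IsIdempotentUF p ∧ (∀ A ∈ p, IsJSet A) ∧ F ∈ p

/-- If `F ⊆ ℕ₊` is a C-set and `n ∈ ℕ₊`, then both `nF = {n * k : k ∈ F}` and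
`n⁻¹F = {k : n * k ∈ F}` are C-sets. -/
theorem cset_mul_and_div (F : Set ℕ+) (hF : IsCSet F) (n : ℕ+) :
    IsCSet {m : ℕ+ | ∃ k ∈ F, m = n * k} ∧ IsCSet {k : ℕ+ | n * k ∈ F} := by
  obtain ⟨p, hp, hJ, hFp⟩ := hF
  constructor
  · refine ⟨p.map (fun k : ℕ+ => n * k), idem_map n p hp, ?_, ?_⟩
    · intro A hA
      rw [Ultrafilter.mem_map] at hA
      exact isJSet_of_preimage n A (hJ _ hA)
    · rw [Ultrafilter.mem_map]
      refine Filter.mem_of_superset hFp ?_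
      intro k hk
      exact ⟨k, hk, rfl⟩
  · refine ⟨p.comap (mul_inj n) (range_mul_mem n p hp), idem_comap n p hp, ?_, ?_⟩
    · intro A hA
      rw [Ultrafilter.mem_comap] at hA
      exact isJSet_of_image n A (hJ _ hA)
    · rw [Ultrafilter.mem_comap]
      refine Filter.mem_of_superset (Filter.inter_mem hFp (range_mul_mem n p hp)) ?_
      rintro x ⟨hxF, k, rfl⟩
      exact ⟨k, by simpa using hxF, rfl⟩
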